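/- Let N ≥ 1, let x, η ∈ ℝ^N with ‖η‖ ≤ ‖x‖, let α ∈ ℝ^N with ‖α‖² = 2, let σ_α(y) = y − ⟨y,α⟩α be the reflection determined by α, and for t ∈ [0,1] let h_{α,t}(y) = y − t⟨y,α⟩α. Let ℓ ≥ 1 be real and let y ∈ ℝ^N be such that A(x,y,η) > 0, A(x,σ_α(y),η) > 0 and A(x,h_{α,t}(y),η) > 0. Then the partial derivatives of the function w ↦ A(x,w,η)^ℓ, evaluated at the point w = h_{α,t}(y), satisfy for each r = 1,…,N: |∂/∂w_r [A(x,·,η)^ℓ](h_{α,t}(y))| ≤ ℓ ( A(x,y,η)^{ℓ−1} + A(x,σ_α(y),η)^{ℓ−1} ). -/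

import Mathlib

open Set

/-- `A(x,y,η) = √(‖x‖² + ‖y‖² − 2⟨y,η⟩)`, viewed as a function of `y`. -/
noncomputable def Afun (N : ℕ) (x η y : EuclideanSpace ℝ (Fin N)) : ℝ :=
  Real.sqrt (‖x‖ ^ 2 + ‖y‖ ^ 2 - 2 * (inner ℝ y η : ℝ))

lemma Afun_eq_sqrt (N : ℕ) (x η w : EuclideanSpace ℝ (Fin N)) :
    Afun N x η w = Real.sqrt (‖w - η‖ ^ 2 + (‖x‖ ^ 2 - ‖η‖ ^ 2)) := by
  rw [Afun]
  congr 1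
  rw [@norm_sub_sq_real]
  ring

lemma hasFDerivAt_Afun_rpow (N : ℕ) (x η : EuclideanSpace ℝ (Fin N))
    (ℓ : ℝ) (p : EuclideanSpace ℝ (Fin N)) (hAh : 0 < Afun N x η p) :
    HasFDerivAt (fun w => Afun N x η w ^ ℓ)
      ((ℓ * Afun N x η p ^ (ℓ - 1) * (Afun N x η p)⁻¹) • (innerSL ℝ (p - η))) p := by
  have hgp : (0:ℝ) < ‖x‖ ^ 2 + ‖p‖ ^ 2 - 2 * (inner ℝ p η : ℝ) := by
    have := hAh; rw [Afun] at this; exact Real.sqrt_pos.mp this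
  have h1 : HasFDerivAt (fun w : EuclideanSpace ℝ (Fin N) => (inner ℝ w w : ℝ))
      ((fderivInnerCLM ℝ (p, p)).comp ((ContinuousLinearMap.id ℝ _).prod (ContinuousLinearMap.id ℝ _))) p :=
    (hasFDerivAt_id p).inner ℝ (hasFDerivAt_id p)
  have h2 : HasFDerivAt (fun w : EuclideanSpace ℝ (Fin N) => (inner ℝ w η : ℝ))
      ((fderivInnerCLM ℝ (p, η)).comp ((ContinuousLinearMap.id ℝ _).prod 0)) p :=
    (hasFDerivAt_id p).inner ℝ (hasFDerivAt_const η p)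
  have h3 := ((hasFDerivAt_const (‖x‖^2) p).add h1).sub (h2.const_smul (2:ℝ))
  have heq : (fun w : EuclideanSpace ℝ (Fin N) => ‖x‖ ^ 2 + (inner ℝ w w : ℝ) - (2:ℝ) • (inner ℝ w η : ℝ))
      = fun w => ‖x‖ ^ 2 + ‖w‖ ^ 2 - 2 * (inner ℝ w η : ℝ) := by
    funext w; rw [real_inner_self_eq_norm_sq, smul_eq_mul]
  change HasFDerivAt (fun w : EuclideanSpace ℝ (Fin N) => ‖x‖ ^ 2 + (inner ℝ w w : ℝ) - (2:ℝ) • (inner ℝ w η : ℝ)) _ p at h3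
  rw [heq] at h3
  have hg : HasFDerivAt (fun w : EuclideanSpace ℝ (Fin N) => ‖x‖ ^ 2 + ‖w‖ ^ 2 - 2 * (inner ℝ w η : ℝ))
      (2 • innerSL ℝ (p - η)) p := by
    refine h3.congr_fderiv ?_
    ext e
    simp [fderivInnerCLM_apply, inner_sub_left, real_inner_comm p e]
    rw [real_inner_comm η e]
    ring
  have hsqrt : HasFDerivAt (Afun N x η) ((1 / (2 * Afun N x η p)) • (2 • innerSL ℝ (p - η))) p := by
    have hs := (Real.hasDerivAt_sqrt hgp.ne').comp_hasFDerivAt p hg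
    exact hs
  have hr := (Real.hasDerivAt_rpow_const (p := ℓ) (Or.inl hAh.ne')).comp_hasFDerivAt p hsqrt
  refine hr.congr_fderiv ?_
  ext e
  simp [ContinuousLinearMap.smul_apply]
  ring

/-- with `σ_α(y) = y − ⟨y,α⟩α` and `h_{α,t}(y) = y − t⟨y,α⟩α`, `‖α‖² = 2`,
`ℓ ≥ 1`, the partial derivatives of `w ↦ A(x,w,η)^ℓ` at `w = h_{α,t}(y)` satisfy
`|∂/∂w_r A^ℓ (h_{α,t}(y))| ≤ ℓ (A(x,y,η)^{ℓ−1} + A(x,σ_α(y),η)^{ℓ−1})`. -/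
theorem deriv_A_rpow_at_segment_point
    (N : ℕ) (hN : 1 ≤ N)
    (x η : EuclideanSpace ℝ (Fin N)) (hη : ‖η‖ ≤ ‖x‖)
    (α : EuclideanSpace ℝ (Fin N)) (hα : (inner ℝ α α : ℝ) = 2)
    (ℓ : ℝ) (hℓ : 1 ≤ ℓ)
    (t : ℝ) (ht : t ∈ Set.Icc (0 : ℝ) 1)
    (y : EuclideanSpace ℝ (Fin N))
    (hAy : 0 < Afun N x η y)
    (hAσ : 0 < Afun N x η (y - (inner ℝ y α : ℝ) • α))
    (hAh : 0 < Afun N x η (y - (t * (inner ℝ y α : ℝ)) • α)) :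
    ∀ r : Fin N,
      |fderiv ℝ (fun w => Afun N x η w ^ ℓ) (y - (t * (inner ℝ y α : ℝ)) • α)
          (EuclideanSpace.single r 1)| ≤
        ℓ * (Afun N x η y ^ (ℓ - 1) +
          Afun N x η (y - (inner ℝ y α : ℝ) • α) ^ (ℓ - 1)) := by
  intro r
  obtain ⟨ht0, ht1⟩ := ht
  set p := y - (t * (inner ℝ y α : ℝ)) • α with hp
  set σ := y - (inner ℝ y α : ℝ) • α with hσ
  have hℓ0 : (0:ℝ) ≤ ℓ - 1 := by linarith
  have hfd := (hasFDerivAt_Afun_rpow N x η ℓ p hAh).fderiv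
  rw [hfd]
  -- evaluate
  have heval : ((ℓ * Afun N x η p ^ (ℓ - 1) * (Afun N x η p)⁻¹) • (innerSL ℝ (p - η)))
      (EuclideanSpace.single r 1)
      = ℓ * Afun N x η p ^ (ℓ - 1) * (Afun N x η p)⁻¹ * (inner ℝ (p - η) (EuclideanSpace.single r 1) : ℝ) := by
    simp [ContinuousLinearMap.smul_apply, inner_sub_left]
  rw [heval]
  -- bound the inner product
  have hinner : |(inner ℝ (p - η) (EuclideanSpace.single r 1) : ℝ)| ≤ ‖p - η‖ := by
    calc |(inner ℝ (p - η) (EuclideanSpace.single r 1) : ℝ)|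
        ≤ ‖p - η‖ * ‖EuclideanSpace.single r (1:ℝ)‖ := abs_real_inner_le_norm _ _
      _ = ‖p - η‖ := by rw [EuclideanSpace.norm_single]; simp
  -- ‖p − η‖ ≤ A p
  have hc : (0:ℝ) ≤ ‖x‖ ^ 2 - ‖η‖ ^ 2 := by
    have : ‖η‖ ^ 2 ≤ ‖x‖ ^ 2 := by exact pow_le_pow_left₀ (norm_nonneg _) hη 2
    linarith
  have hnormle : ‖p - η‖ ≤ Afun N x η p := by
    rw [Afun_eq_sqrt, show ‖p - η‖ = Real.sqrt (‖p - η‖ ^ 2) by rw [Real.sqrt_sq (norm_nonneg _)]]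
    exact Real.sqrt_le_sqrt (by nlinarith [Real.sq_sqrt (by nlinarith [norm_nonneg (p-η)] : (0:ℝ) ≤ ‖p - η‖ ^ 2)])
  -- A p ≤ max (A y) (A σ)
  have hconv : p - η = (1 - t) • (y - η) + t • (σ - η) := by
    rw [hp, hσ]
    module
  have hpn : ‖p - η‖ ≤ max ‖y - η‖ ‖σ - η‖ := by
    rw [hconv]
    calc ‖(1 - t) • (y - η) + t • (σ - η)‖
        ≤ ‖(1 - t) • (y - η)‖ + ‖t • (σ - η)‖ := norm_add_le _ _
      _ = (1 - t) * ‖y - η‖ + t * ‖σ - η‖ := by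
          rw [norm_smul, norm_smul, Real.norm_eq_abs, Real.norm_eq_abs,
            abs_of_nonneg (by linarith : (0:ℝ) ≤ 1 - t), abs_of_nonneg ht0]
      _ ≤ (1 - t) * max ‖y - η‖ ‖σ - η‖ + t * max ‖y - η‖ ‖σ - η‖ := by
          have h1 : ‖y - η‖ ≤ max ‖y - η‖ ‖σ - η‖ := le_max_left _ _
          have h2 : ‖σ - η‖ ≤ max ‖y - η‖ ‖σ - η‖ := le_max_right _ _
          have := mul_le_mul_of_nonneg_left h1 (by linarith : (0:ℝ) ≤ 1 - t)
          have := mul_le_mul_of_nonneg_left h2 ht0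
          linarith
      _ = max ‖y - η‖ ‖σ - η‖ := by ring
  have hAle : Afun N x η p ≤ max (Afun N x η y) (Afun N x η σ) := by
    rcases le_total ‖y - η‖ ‖σ - η‖ with h | h
    · refine le_trans ?_ (le_max_right _ _)
      rw [Afun_eq_sqrt, Afun_eq_sqrt]
      apply Real.sqrt_le_sqrt
      have h2 : ‖p - η‖ ≤ ‖σ - η‖ := le_trans hpn (by rw [max_eq_right h])
      have h3 := pow_le_pow_left₀ (norm_nonneg (p - η)) h2 2
      linarith
    · refine le_trans ?_ (le_max_left _ _)
      rw [Afun_eq_sqrt, Afun_eq_sqrt]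
      apply Real.sqrt_le_sqrt
      have h2 : ‖p - η‖ ≤ ‖y - η‖ := le_trans hpn (by rw [max_eq_left h])
      have h3 := pow_le_pow_left₀ (norm_nonneg (p - η)) h2 2
      linarith
  -- now pure real arithmetic
  obtain ⟨ap, hap⟩ : ∃ a, Afun N x η p = a := ⟨_, rfl⟩
  obtain ⟨ay, hay⟩ : ∃ a, Afun N x η y = a := ⟨_, rfl⟩
  obtain ⟨as, has⟩ : ∃ a, Afun N x η σ = a := ⟨_, rfl⟩
  obtain ⟨ip, hip⟩ : ∃ a, (inner ℝ (p - η) (EuclideanSpace.single r (1:ℝ)) : ℝ) = a := ⟨_, rfl⟩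
  obtain ⟨np, hnp⟩ : ∃ a, ‖p - η‖ = a := ⟨_, rfl⟩
  rw [hap] at hAh hAle hnormle
  rw [hay] at hAy hAle
  rw [has] at hAσ hAle
  rw [hip] at hinner
  rw [hnp] at hinner hnormle
  rw [hap, hay, has, hip]
  have hap0 : 0 < ap := hAh
  have hay0 : 0 < ay := hAy
  have has0 : 0 < as := hAσ
  have hrpow : ap ^ (ℓ - 1) ≤ ay ^ (ℓ - 1) + as ^ (ℓ - 1) := by
    have h1 : ap ^ (ℓ - 1) ≤ (max ay as) ^ (ℓ - 1) :=
      Real.rpow_le_rpow hap0.le hAle hℓ0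
    refine le_trans h1 ?_
    rcases max_cases ay as with ⟨hm, _⟩ | ⟨hm, _⟩ <;> rw [hm]
    · exact le_add_of_nonneg_right (Real.rpow_nonneg has0.le _)
    · exact le_add_of_nonneg_left (Real.rpow_nonneg hay0.le _)
  have hr0 : (0:ℝ) ≤ ap ^ (ℓ - 1) := Real.rpow_nonneg hap0.le _
  have hl0 : (0:ℝ) ≤ ℓ := by linarith
  have hnn : (0:ℝ) ≤ ℓ * ap ^ (ℓ - 1) * ap⁻¹ :=
    mul_nonneg (mul_nonneg hl0 hr0) (inv_nonneg.mpr hap0.le)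
  calc |ℓ * ap ^ (ℓ - 1) * ap⁻¹ * ip|
      = ℓ * ap ^ (ℓ - 1) * ap⁻¹ * |ip| := by rw [abs_mul, abs_of_nonneg hnn]
    _ ≤ ℓ * ap ^ (ℓ - 1) * ap⁻¹ * ap := by
        apply mul_le_mul_of_nonneg_left (le_trans hinner hnormle) hnn
    _ = ℓ * ap ^ (ℓ - 1) := by field_simp
    _ ≤ ℓ * (ay ^ (ℓ - 1) + as ^ (ℓ - 1)) := mul_le_mul_of_nonneg_left hrpow hl0
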